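/- Let p ∈ (0,1] and suppose that for each k, s_k : X^k → ℝ^m is measurable, and that s_n(ξ̃_1,…,ξ̃_n) → 0 in probability where ξ̃_i are i.i.d. with law Q̃ (the conditional law of ξ given δ = 1). Let S_{c,n} be the complete case statistic associated with (s_k). Then S_{c,n} → 0 in probability. -/

import Mathlib

open MeasureTheory ProbabilityTheory Filter ENNReal

/-- The complete case statistic based on the first `n` observations of a sequence. -/
noncomputable def ccStatSeq {Ω X E : Type*}
    (s : (k : ℕ) → (Fin k → X) → E)
    (δ : ℕ → Ω → Bool) (ξ : ℕ → Ω → X) (n : ℕ) (ω : Ω) : E :=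
  let A : Finset ℕ := (Finset.range n).filter (fun i => δ i ω = true)
  s A.card (fun j => ξ (A.orderIsoOfFin rfl j) ω)

section Aux

variable {X E : Type*}

/-- pattern of a vector -/
def ccPatt {n : ℕ} (v : Fin n → Bool × X) : Finset (Fin n) :=
  Finset.univ.filter (fun i => (v i).1 = true)

/-- complete case statistic on a finite vector -/
noncomputable def ccG (s : (k : ℕ) → (Fin k → X) → E) {n : ℕ} (v : Fin n → Bool × X) : E :=
  s (ccPatt v).card (fun j => (v ((ccPatt v).orderEmbOfFin rfl j)).2)

lemma s_congr (s : (k : ℕ) → (Fin k → X) → E) {k k' : ℕ} (h : k = k')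
    {f : Fin k → X} {f' : Fin k' → X} (hf : ∀ j : Fin k', f (Fin.cast h.symm j) = f' j) :
    s k f = s k' f' := by
  subst h
  have : f = f' := funext fun j => hf j
  rw [this]

lemma ccG_of_patt (s : (k : ℕ) → (Fin k → X) → E) {n : ℕ} {v : Fin n → Bool × X}
    {A : Finset (Fin n)} (h : ccPatt v = A) :
    ccG s v = s A.card (fun j => (v (A.orderEmbOfFin rfl j)).2) := by
  subst h; rfl

lemma ccStatSeq_eq_ccG {Ω : Type*} (s : (k : ℕ) → (Fin k → X) → E)
    (δ : ℕ → Ω → Bool) (ξ : ℕ → Ω → X) (n : ℕ) (ω : Ω) :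
    ccStatSeq s δ ξ n ω = ccG s (fun j : Fin n => (δ j ω, ξ j ω)) := by
  set v : Fin n → Bool × X := fun j => (δ j ω, ξ j ω) with hv
  set B : Finset (Fin n) := ccPatt v with hB
  set A₁ : Finset ℕ := (Finset.range n).filter (fun i => δ i ω = true) with hA₁
  have hA : A₁ = B.map Fin.valEmbedding := by
    ext i
    simp only [hA₁, Finset.mem_filter, Finset.mem_range, Finset.mem_map, hB, ccPatt,
      Finset.mem_univ, true_and, Fin.valEmbedding_apply]
    constructor
    · rintro ⟨hi, hd⟩; exact ⟨⟨i, hi⟩, hd, rfl⟩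
    · rintro ⟨a, ha, rfl⟩; exact ⟨a.isLt, ha⟩
  have hcard : A₁.card = B.card := by rw [hA, Finset.card_map]
  have hmemB : ∀ j : Fin B.card, (B.orderEmbOfFin rfl j : Fin n) ∈ B :=
    fun j => Finset.orderEmbOfFin_mem _ _ _
  have hfun : (fun j' : Fin A₁.card =>
      ((B.orderEmbOfFin rfl (Fin.cast hcard j') : Fin n) : ℕ))
      = ⇑(A₁.orderEmbOfFin rfl) := by
    apply Finset.orderEmbOfFin_unique
    · intro x
      have hmem := hmemB (Fin.cast hcard x)
      have hsub : ∀ y : ℕ, y ∈ B.map Fin.valEmbedding → y ∈ A₁ := fun y hy => by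
        rw [hA]; exact hy
      exact hsub _ (Finset.mem_map_of_mem _ hmem)
    · intro a b hab
      exact (B.orderEmbOfFin rfl).strictMono (show Fin.cast hcard a < Fin.cast hcard b from hab)
  simp only [ccStatSeq, ccG]
  refine s_congr s hcard ?_
  intro j
  rw [Finset.coe_orderIsoOfFin_apply]
  refine congrArg (fun i => ξ i ω) ?_
  exact (congrFun hfun (Fin.cast hcard.symm j)).symm

lemma ccPatt_eq_iff [MeasurableSpace X] {n : ℕ} (A : Finset (Fin n)) :
    {v : Fin n → Bool × X | ccPatt v = A}
      = Set.univ.pi (fun i => {x : Bool × X | x.1 = decide (i ∈ A)}) := by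
  ext v
  simp only [Set.mem_setOf_eq, Set.mem_univ_pi, Set.mem_setOf_eq, Finset.ext_iff, ccPatt,
    Finset.mem_filter, Finset.mem_univ, true_and]
  refine forall_congr' fun i => ?_
  by_cases h : i ∈ A <;> simp [h]

lemma ccG_measurable [MeasurableSpace X] [MeasurableSpace E]
    (s : (k : ℕ) → (Fin k → X) → E) (hs : ∀ k, Measurable (s k)) (n : ℕ) :
    Measurable (ccG s (n := n)) := by
  intro C hC
  have hrepr : ccG s ⁻¹' C = ⋃ A : Finset (Fin n),
      ({v : Fin n → Bool × X | ccPatt v = A} ∩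
        (fun v (j : Fin A.card) => (v (A.orderEmbOfFin rfl j)).2) ⁻¹' (s A.card ⁻¹' C)) := by
    ext v
    simp only [Set.mem_preimage, Set.mem_iUnion, Set.mem_inter_iff, Set.mem_setOf_eq]
    constructor
    · intro h
      exact ⟨ccPatt v, rfl, by rwa [← ccG_of_patt s rfl]⟩
    · rintro ⟨A, hA, h⟩
      rwa [ccG_of_patt s hA]
  rw [hrepr]
  refine MeasurableSet.iUnion fun A => MeasurableSet.inter ?_ ?_
  · rw [ccPatt_eq_iff]
    exact MeasurableSet.univ_pi fun i => measurable_fst (measurableSet_singleton _)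
  · exact (measurable_pi_lambda _ fun j =>
      (measurable_pi_apply (A.orderEmbOfFin rfl j)).snd) (hs A.card hC)

end Aux

section MeasAux

lemma my_restrict_pi {ι : Type*} [Fintype ι] {α : ι → Type*} [∀ i, MeasurableSpace (α i)]
    (μ : ∀ i, Measure (α i)) [∀ i, IsFiniteMeasure (μ i)]
    (C : ∀ i, Set (α i)) :
    Measure.pi (fun i => (μ i).restrict (C i)) = (Measure.pi μ).restrict (Set.univ.pi C) := by
  refine Measure.pi_eq fun s hs => ?_
  rw [Measure.restrict_apply (MeasurableSet.univ_pi hs), ← Set.pi_inter_distrib, Measure.pi_pi]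
  exact Finset.prod_congr rfl fun i _ => (Measure.restrict_apply (hs i)).symm

lemma my_pi_smul {ι : Type*} [Fintype ι] {α : ι → Type*} [∀ i, MeasurableSpace (α i)]
    (c : ι → ℝ≥0∞) (hc : ∀ i, c i ≠ ∞)
    (ρ : ∀ i, Measure (α i)) (hρ : ∀ i, IsProbabilityMeasure (ρ i)) :
    Measure.pi (fun i => c i • ρ i) = (∏ i, c i) • Measure.pi ρ := by
  haveI := hρ
  haveI : ∀ i, IsFiniteMeasure (c i • ρ i) := fun i =>
    ⟨by simp [lt_top_iff_ne_top, hc i]⟩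
  refine Measure.pi_eq fun s hs => ?_
  simp only [Measure.smul_apply, Measure.pi_pi, smul_eq_mul, Finset.prod_mul_distrib]

lemma my_map_extract {X : Type*} [MeasurableSpace X] {n k : ℕ} (e : Fin k → Fin n)
    (he : Function.Injective e)
    (ρ : Fin n → Measure (Bool × X)) (hρp : ∀ i, IsProbabilityMeasure (ρ i))
    (Q : Measure X) [IsProbabilityMeasure Q]
    (hρ : ∀ j, Measure.map Prod.snd (ρ (e j)) = Q) :
    Measure.map (fun (v : Fin n → Bool × X) (j : Fin k) => (v (e j)).2) (Measure.pi ρ)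
      = Measure.pi (fun _ : Fin k => Q) := by
  classical
  haveI := hρp
  refine (Measure.pi_eq fun t ht => ?_).symm
  have hφ : Measurable (fun (v : Fin n → Bool × X) (j : Fin k) => (v (e j)).2) :=
    measurable_pi_lambda _ fun j => (measurable_pi_apply (e j)).snd
  rw [Measure.map_apply hφ (MeasurableSet.univ_pi ht)]
  set u : Fin n → Set (Bool × X) := fun i => ⋂ (j : Fin k) (_ : e j = i), Prod.snd ⁻¹' t j
    with hu
  have hpre : (fun (v : Fin n → Bool × X) (j : Fin k) => (v (e j)).2) ⁻¹' (Set.univ.pi t)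
      = Set.univ.pi u := by
    ext v
    simp only [Set.mem_preimage, Set.mem_univ_pi, hu, Set.mem_iInter, Set.mem_preimage]
    constructor
    · intro h i j hj; subst hj; exact h j
    · intro h j; exact h (e j) j rfl
  rw [hpre, Measure.pi_pi]
  have h1 : ∀ j : Fin k, u (e j) = Prod.snd ⁻¹' t j := by
    intro j
    ext x
    simp only [hu, Set.mem_iInter, Set.mem_preimage]
    constructor
    · intro h; exact h j rfl
    · intro h j' hj'; rwa [he hj']
  have h2 : ∀ i, (∀ j, e j ≠ i) → u i = Set.univ := by
    intro i hi
    ext x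
    simp only [hu, Set.mem_iInter, Set.mem_univ, iff_true]
    intro j hj
    exact absurd hj (hi j)
  have hout : ∀ i ∈ Finset.univ, i ∉ Finset.image e Finset.univ → (ρ i) (u i) = 1 := by
    intro i _ hi
    rw [h2 i (fun j hj => hi (Finset.mem_image.mpr ⟨j, Finset.mem_univ j, hj⟩))]
    exact measure_univ
  calc ∏ i, (ρ i) (u i)
      = ∏ i ∈ Finset.image e Finset.univ, (ρ i) (u i) :=
        (Finset.prod_subset (Finset.subset_univ _) hout).symm
    _ = ∏ j, (ρ (e j)) (u (e j)) := Finset.prod_image fun a _ b _ h => he h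
    _ = ∏ j, Q (t j) := by
        refine Finset.prod_congr rfl fun j _ => ?_
        rw [h1 j, ← hρ j, Measure.map_apply measurable_snd (ht j)]

lemma my_sum_pow_card (n : ℕ) (x y : ℝ≥0∞) :
    ∑ A : Finset (Fin n), x ^ A.card * y ^ (n - A.card) = (x + y) ^ n := by
  classical
  have h := Finset.prod_add (fun _ : Fin n => x) (fun _ : Fin n => y) Finset.univ
  simp only [Finset.prod_const, Finset.card_univ, Fintype.card_fin,
    Finset.powerset_univ] at h
  rw [h]
  refine Finset.sum_congr rfl fun A _ => ?_
  congr 2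
  rw [Finset.card_univ_diff, Fintype.card_fin]

end MeasAux

theorem complete_case_tendsto_zero {Ω X : Type*} [MeasurableSpace Ω] [MeasurableSpace X]
    (P : Measure Ω) [IsProbabilityMeasure P] {m : ℕ}
    (s : (k : ℕ) → (Fin k → X) → (Fin m → ℝ)) (hs : ∀ k, Measurable (s k))
    (δ : ℕ → Ω → Bool) (ξ : ℕ → Ω → X)
    (hδ : ∀ j, Measurable (δ j)) (hξ : ∀ j, Measurable (ξ j))
    (μ : Measure (Bool × X)) [IsProbabilityMeasure μ]
    -- the `(δ_j, ξ_j)` are i.i.d. copies of a pair with law `μ`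
    (hiid : ∀ n : ℕ, Measure.map (fun ω => fun j : Fin n => (δ j ω, ξ j ω)) P =
      Measure.pi (fun _ : Fin n => μ))
    -- `p = P(δ = 1) > 0`
    (p : ℝ≥0∞) (hp : p = μ {x | x.1 = true}) (hp0 : 0 < p)
    -- `Q̃` is the conditional law of `ξ` given `δ = 1`
    (Q : Measure X) [IsProbabilityMeasure Q]
    (hQ : Q = p⁻¹ • Measure.map Prod.snd (μ.restrict {x | x.1 = true}))
    -- `s_n(ξ̃_1, …, ξ̃_n) → 0` in probability under i.i.d. `Q̃`-sampling
    (hs0 : ∀ ε : ℝ, 0 < ε →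
      Tendsto (fun n : ℕ => Measure.pi (fun _ : Fin n => Q) {x | ε ≤ ‖s n x‖})
        atTop (nhds 0)) :
    -- the complete case statistic converges to `0` in probability
    ∀ ε : ℝ, 0 < ε →
      Tendsto (fun n : ℕ => P {ω | ε ≤ ‖ccStatSeq s δ ξ n ω‖}) atTop (nhds 0) := by
  classical
  intro ε hε
  have hTt : MeasurableSet {x : Bool × X | x.1 = true} :=
    measurable_fst (measurableSet_singleton true)
  set q : ℝ≥0∞ := μ {x : Bool × X | x.1 = false} with hq
  have hcompl : {x : Bool × X | x.1 = false} = {x : Bool × X | x.1 = true}ᶜ := by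
    ext x; simp
  have hpq : p + q = 1 := by
    rw [hp, hq, hcompl]
    exact (measure_add_measure_compl hTt).trans measure_univ
  have hp0' : p ≠ 0 := hp0.ne'
  have hple : p ≤ 1 := by rw [hp]; exact prob_le_one
  have hqle : q ≤ 1 := by rw [hq]; exact prob_le_one
  have hpt : p ≠ ∞ := (lt_of_le_of_lt hple one_lt_top).ne
  have hqt : q ≠ ∞ := (lt_of_le_of_lt hqle one_lt_top).ne
  set ρT : Measure (Bool × X) := p⁻¹ • μ.restrict {x : Bool × X | x.1 = true} with hρT
  have hρTprob : IsProbabilityMeasure ρT := by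
    refine ⟨?_⟩
    rw [hρT, Measure.smul_apply, Measure.restrict_apply_univ, smul_eq_mul, ← hp]
    exact ENNReal.inv_mul_cancel hp0' hpt
  set ρF : Measure (Bool × X) :=
    if q = 0 then μ else q⁻¹ • μ.restrict {x : Bool × X | x.1 = false} with hρF
  have hρFprob : IsProbabilityMeasure ρF := by
    rw [hρF]; split_ifs with h
    · infer_instance
    · refine ⟨?_⟩
      rw [Measure.smul_apply, Measure.restrict_apply_univ, smul_eq_mul, ← hq]
      exact ENNReal.inv_mul_cancel h hqt
  have hrT : μ.restrict {x : Bool × X | x.1 = true} = p • ρT := by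
    rw [hρT, smul_smul, ENNReal.mul_inv_cancel hp0' hpt, one_smul]
  have hrF : μ.restrict {x : Bool × X | x.1 = false} = q • ρF := by
    rw [hρF]; split_ifs with h
    · rw [h, zero_smul, Measure.restrict_eq_zero]
      rw [← hq]; exact h
    · rw [smul_smul, ENNReal.mul_inv_cancel h hqt, one_smul]
  have hQT : Measure.map Prod.snd ρT = Q := by
    rw [hρT, Measure.map_smul, ← hQ]
  set F : ℕ → ℝ≥0∞ := fun k => Measure.pi (fun _ : Fin k => Q) {x | ε ≤ ‖s k x‖} with hF
  have hSmeas : ∀ k, MeasurableSet {x : Fin k → X | ε ≤ ‖s k x‖} := fun k =>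
    hs k (measurableSet_le measurable_const measurable_norm)
  have hF1 : ∀ k, F k ≤ 1 := fun k => prob_le_one
  -- the key distributional identity
  have key : ∀ n : ℕ, P {ω | ε ≤ ‖ccStatSeq s δ ξ n ω‖}
      = ∑ A : Finset (Fin n), p ^ A.card * q ^ (n - A.card) * F A.card := by
    intro n
    have hψ : Measurable (fun ω => fun j : Fin n => (δ j ω, ξ j ω)) :=
      measurable_pi_lambda _ fun j => (hδ j).prodMk (hξ j)
    have hGmeas : Measurable (ccG s (n := n)) := ccG_measurable s hs n
    have hBmeas : MeasurableSet {v : Fin n → Bool × X | ε ≤ ‖ccG s v‖} :=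
      hGmeas (measurableSet_le measurable_const measurable_norm)
    have hset : {ω | ε ≤ ‖ccStatSeq s δ ξ n ω‖}
        = (fun ω => fun j : Fin n => (δ j ω, ξ j ω)) ⁻¹' {v | ε ≤ ‖ccG s v‖} := by
      ext ω
      simp only [Set.mem_setOf_eq, Set.mem_preimage, ccStatSeq_eq_ccG]
    rw [hset, ← Measure.map_apply hψ hBmeas, hiid n]
    have hslice_eq : {v : Fin n → Bool × X | ε ≤ ‖ccG s v‖}
        = ⋃ A : Finset (Fin n), ({v : Fin n → Bool × X | ccPatt v = A} ∩
            (fun v (j : Fin A.card) => (v (A.orderEmbOfFin rfl j)).2) ⁻¹'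
              {x : Fin A.card → X | ε ≤ ‖s A.card x‖}) := by
      ext v
      simp only [Set.mem_setOf_eq, Set.mem_iUnion, Set.mem_inter_iff, Set.mem_preimage]
      constructor
      · intro h
        exact ⟨ccPatt v, rfl, by rwa [← ccG_of_patt s rfl]⟩
      · rintro ⟨A, hA, h⟩
        rwa [ccG_of_patt s hA]
    have hslmeas : ∀ A : Finset (Fin n), MeasurableSet ({v : Fin n → Bool × X | ccPatt v = A} ∩
        (fun v (j : Fin A.card) => (v (A.orderEmbOfFin rfl j)).2) ⁻¹'
          {x : Fin A.card → X | ε ≤ ‖s A.card x‖}) := by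
      intro A
      refine MeasurableSet.inter ?_ ?_
      · rw [ccPatt_eq_iff]
        exact MeasurableSet.univ_pi fun i => measurable_fst (measurableSet_singleton _)
      · exact (measurable_pi_lambda _ fun j =>
          (measurable_pi_apply (A.orderEmbOfFin rfl j)).snd) (hSmeas A.card)
    have hdisj : Pairwise (Function.onFun Disjoint
        (fun A : Finset (Fin n) => {v : Fin n → Bool × X | ccPatt v = A} ∩
          (fun v (j : Fin A.card) => (v (A.orderEmbOfFin rfl j)).2) ⁻¹'
            {x : Fin A.card → X | ε ≤ ‖s A.card x‖})) := by
      intro A B hAB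
      refine Set.disjoint_left.mpr fun v hv hv' => hAB ?_
      exact hv.1.symm.trans hv'.1
    rw [hslice_eq, measure_iUnion hdisj hslmeas, tsum_fintype]
    refine Finset.sum_congr rfl fun A _ => ?_
    -- compute the measure of one slice
    have hCmeas : ∀ i : Fin n, MeasurableSet {x : Bool × X | x.1 = decide (i ∈ A)} :=
      fun i => measurable_fst (measurableSet_singleton _)
    rw [ccPatt_eq_iff, Set.inter_comm,
      ← Measure.restrict_apply' (MeasurableSet.univ_pi hCmeas),
      ← my_restrict_pi (fun _ : Fin n => μ) (fun i => {x : Bool × X | x.1 = decide (i ∈ A)})]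
    have hres : (fun i : Fin n => μ.restrict {x : Bool × X | x.1 = decide (i ∈ A)})
        = fun i => (if i ∈ A then p else q) • (if i ∈ A then ρT else ρF) := by
      funext i
      by_cases h : i ∈ A
      · simp only [h, if_true, decide_eq_true_eq, decide_true]
        exact hrT
      · simp only [h, if_false, decide_false]
        exact hrF
    rw [hres, my_pi_smul _ (fun i => by split_ifs; exacts [hpt, hqt]) _
      (fun i => by show IsProbabilityMeasure (if i ∈ A then ρT else ρF); split_ifs; exacts [hρTprob, hρFprob])]
    rw [Measure.smul_apply, smul_eq_mul]
    have hprod : (∏ i : Fin n, if i ∈ A then p else q) = p ^ A.card * q ^ (n - A.card) := by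
      rw [Finset.prod_ite, Finset.prod_const, Finset.prod_const]
      congr 2
      · congr 1
        ext i; simp
      · rw [show Finset.univ.filter (fun i : Fin n => ¬ i ∈ A) = Aᶜ by ext i; simp [Finset.mem_compl]]
        rw [Finset.card_compl, Fintype.card_fin]
    rw [hprod]
    have hmape := my_map_extract (fun j : Fin A.card => A.orderEmbOfFin rfl j)
      (fun a b h => (A.orderEmbOfFin rfl).injective h)
      (fun i => if i ∈ A then ρT else ρF)
      (fun i => by show IsProbabilityMeasure (if i ∈ A then ρT else ρF); split_ifs; exacts [hρTprob, hρFprob]) Q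
      (fun j => by show Measure.map Prod.snd (if ((A.orderEmbOfFin rfl j) : Fin n) ∈ A then ρT else ρF) = Q; rw [if_pos (Finset.orderEmbOfFin_mem A rfl j)]; exact hQT)
    have hextr : Measurable (fun (v : Fin n → Bool × X) (j : Fin A.card) =>
        (v (A.orderEmbOfFin rfl j)).2) :=
      measurable_pi_lambda _ fun j => (measurable_pi_apply (A.orderEmbOfFin rfl j)).snd
    rw [← Measure.map_apply hextr (hSmeas A.card), hmape, mul_assoc]
  -- now the limit
  have hfe : (fun n : ℕ => P {ω | ε ≤ ‖ccStatSeq s δ ξ n ω‖})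
      = fun n : ℕ => ∑ A : Finset (Fin n), p ^ A.card * q ^ (n - A.card) * F A.card :=
    funext key
  rw [hfe, ENNReal.tendsto_atTop_zero]
  intro ε' hε'
  have hhalf : (0 : ℝ≥0∞) < ε' / 2 := ENNReal.half_pos hε'.ne'
  obtain ⟨K, hK⟩ : ∃ K : ℕ, ∀ k ≥ K, F k ≤ ε' / 2 := by
    have h := (hs0 ε hε).eventually (gt_mem_nhds hhalf)
    rw [eventually_atTop] at h
    obtain ⟨K, hK⟩ := h
    exact ⟨K, fun k hk => (hK k hk).le⟩
  set r : ℝ≥0∞ := p / 2 + q with hr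
  have hr1 : r < 1 := by
    rw [hr, ← hpq]
    exact ENNReal.add_lt_add_right hqt (ENNReal.half_lt_self hp0' hpt)
  have h2K : ((2 : ℝ≥0∞) ^ K) ≠ ∞ := by simp
  have hgeo : Tendsto (fun n : ℕ => (2 : ℝ≥0∞) ^ K * r ^ n) atTop (nhds 0) := by
    have h0 := ENNReal.tendsto_pow_atTop_nhds_zero_of_lt_one hr1
    have := ENNReal.Tendsto.const_mul h0 (Or.inr h2K)
    simpa using this
  obtain ⟨N, hN⟩ := ENNReal.tendsto_atTop_zero.mp hgeo (ε' / 2) hhalf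
  refine ⟨N, fun n hn => ?_⟩
  have h2p : (2 : ℝ≥0∞) * (p / 2) = p := by
    rw [mul_comm]
    exact ENNReal.div_mul_cancel (by norm_num) (by norm_num)
  have hbound1 : (∑ A ∈ Finset.univ.filter (fun A : Finset (Fin n) => A.card < K),
      p ^ A.card * q ^ (n - A.card)) ≤ 2 ^ K * r ^ n := by
    calc (∑ A ∈ Finset.univ.filter (fun A : Finset (Fin n) => A.card < K),
        p ^ A.card * q ^ (n - A.card))
        ≤ ∑ A ∈ Finset.univ.filter (fun A : Finset (Fin n) => A.card < K),
          2 ^ K * ((p / 2) ^ A.card * q ^ (n - A.card)) := by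
          refine Finset.sum_le_sum fun A hA => ?_
          rw [Finset.mem_filter] at hA
          have hA2 : p ^ A.card = 2 ^ A.card * (p / 2) ^ A.card := by
            rw [← mul_pow, h2p]
          calc p ^ A.card * q ^ (n - A.card)
              = 2 ^ A.card * ((p / 2) ^ A.card * q ^ (n - A.card)) := by
                rw [hA2, mul_assoc]
            _ ≤ 2 ^ K * ((p / 2) ^ A.card * q ^ (n - A.card)) :=
                mul_le_mul' (pow_le_pow_right₀ one_le_two hA.2.le) le_rfl
      _ ≤ ∑ A : Finset (Fin n), 2 ^ K * ((p / 2) ^ A.card * q ^ (n - A.card)) :=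
          Finset.sum_le_sum_of_subset (Finset.filter_subset _ _)
      _ = 2 ^ K * ∑ A : Finset (Fin n), (p / 2) ^ A.card * q ^ (n - A.card) := by
          rw [Finset.mul_sum]
      _ = 2 ^ K * r ^ n := by rw [my_sum_pow_card, hr]
  have hbound2 : (∑ A ∈ Finset.univ.filter (fun A : Finset (Fin n) => ¬ A.card < K),
      p ^ A.card * q ^ (n - A.card) * (ε' / 2)) ≤ ε' / 2 := by
    calc (∑ A ∈ Finset.univ.filter (fun A : Finset (Fin n) => ¬ A.card < K),
        p ^ A.card * q ^ (n - A.card) * (ε' / 2))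
        ≤ ∑ A : Finset (Fin n), p ^ A.card * q ^ (n - A.card) * (ε' / 2) :=
          Finset.sum_le_sum_of_subset (Finset.filter_subset _ _)
      _ = (∑ A : Finset (Fin n), p ^ A.card * q ^ (n - A.card)) * (ε' / 2) :=
          (Finset.sum_mul _ _ _).symm
      _ = 1 * (ε' / 2) := by rw [my_sum_pow_card, hpq, one_pow]
      _ = ε' / 2 := one_mul _
  calc ∑ A : Finset (Fin n), p ^ A.card * q ^ (n - A.card) * F A.card
      ≤ ∑ A : Finset (Fin n), (if A.card < K then p ^ A.card * q ^ (n - A.card)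
          else p ^ A.card * q ^ (n - A.card) * (ε' / 2)) := by
        refine Finset.sum_le_sum fun A _ => ?_
        by_cases h : A.card < K
        · rw [if_pos h]
          calc p ^ A.card * q ^ (n - A.card) * F A.card
              ≤ p ^ A.card * q ^ (n - A.card) * 1 := mul_le_mul' le_rfl (hF1 _)
            _ = p ^ A.card * q ^ (n - A.card) := mul_one _
        · rw [if_neg h]
          exact mul_le_mul' le_rfl (hK _ (not_lt.mp h))
    _ = (∑ A ∈ Finset.univ.filter (fun A : Finset (Fin n) => A.card < K),
          p ^ A.card * q ^ (n - A.card))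
        + ∑ A ∈ Finset.univ.filter (fun A : Finset (Fin n) => ¬ A.card < K),
          p ^ A.card * q ^ (n - A.card) * (ε' / 2) := Finset.sum_ite _ _
    _ ≤ 2 ^ K * r ^ n + ε' / 2 := add_le_add hbound1 hbound2
    _ ≤ ε' / 2 + ε' / 2 := add_le_add (hN n hn) le_rfl
    _ = ε' := ENNReal.add_halves ε'
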